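/- Let ξ be a continuous solution of ξ ∘ f = f ∘ ξ for the tent map f. Then the slopes of all secants of ξ over dyadic intervals are uniformly bounded: there exists t such that for all n and all 0 ≤ k < 2^n, |2^n (ξ((k+1)/2^n) - ξ(k/2^n))| < t. -/

import Mathlib

noncomputable def tent (x : ℝ) : ℝ := 1 - |2 * x - 1|

open Set

lemma tent_left {x : ℝ} (h1 : x ≤ 1/2) : tent x = 2 * x := by
  have h : |2 * x - 1| = 1 - 2 * x := by
    rw [abs_of_nonpos (by linarith)]; ring
  rw [tent, h]; ring

lemma tent_right {x : ℝ} (h1 : 1/2 ≤ x) : tent x = 2 - 2 * x := by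
  have h : |2 * x - 1| = 2 * x - 1 := abs_of_nonneg (by linarith)
  rw [tent, h]; ring

lemma tent_mem {x : ℝ} (hx : x ∈ Icc (0:ℝ) 1) : tent x ∈ Icc (0:ℝ) 1 := by
  obtain ⟨h0, h1⟩ := hx
  constructor
  · have h : |2*x - 1| ≤ 1 := by rw [abs_le]; constructor <;> linarith
    rw [tent]; linarith
  · have h : 0 ≤ |2*x-1| := abs_nonneg _
    rw [tent]; linarith

lemma tent_iter_mem : ∀ (j : ℕ) {x : ℝ}, x ∈ Icc (0:ℝ) 1 → tent^[j] x ∈ Icc (0:ℝ) 1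
  | 0, x, hx => hx
  | (j+1), x, hx => by
    rw [Function.iterate_succ_apply]
    exact tent_iter_mem j (tent_mem hx)

lemma tent_lip (x y : ℝ) : |tent x - tent y| ≤ 2 * |x - y| := by
  have h := abs_abs_sub_abs_le_abs_sub (2*y - 1) (2*x - 1)
  have he : tent x - tent y = |2*y - 1| - |2*x - 1| := by rw [tent, tent]; ring
  rw [he]
  have h2 : (2*y - 1) - (2*x - 1) = 2 * (y - x) := by ring
  rw [h2] at h
  have h3 : |2 * (y - x)| = 2 * |x - y| := by
    rw [abs_mul, abs_sub_comm]; norm_num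
  exact h.trans (le_of_eq h3)

lemma tent_iter_lip : ∀ (j : ℕ) (x y : ℝ), |tent^[j] x - tent^[j] y| ≤ 2^j * |x - y|
  | 0, x, y => by simp
  | (j+1), x, y => by
    rw [Function.iterate_succ_apply, Function.iterate_succ_apply]
    calc |tent^[j] (tent x) - tent^[j] (tent y)| ≤ 2^j * |tent x - tent y| :=
          tent_iter_lip j _ _
      _ ≤ 2^j * (2 * |x - y|) := by
          have := tent_lip x y
          have h2 : (0:ℝ) ≤ 2^j := by positivity
          nlinarith [abs_nonneg (tent x - tent y)]
      _ = 2^(j+1) * |x - y| := by ring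

lemma image_succ (s : Set ℝ) (j : ℕ) : tent^[j+1] '' s = tent^[j] '' (tent '' s) := by
  rw [Function.iterate_succ, Set.image_comp]

/-- Covering from an interval anchored at 0. -/
lemma coverC : ∀ (j : ℕ) (y : ℝ), 0 ≤ y → y ≤ 1 → 1 ≤ 2^j * y →
    Icc (0:ℝ) 1 ⊆ tent^[j] '' Icc 0 y := by
  intro j
  induction j with
  | zero =>
    intro y h0 h1 hy
    simp only [pow_zero, one_mul] at hy
    intro z hz
    exact ⟨z, ⟨hz.1, le_trans hz.2 hy⟩, by simp⟩
  | succ j ih =>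
    intro y h0 h1 hy
    rw [image_succ]
    by_cases hc : y ≤ 1/2
    · have h2 : Icc (0:ℝ) (2*y) ⊆ tent '' Icc 0 y := by
        intro z hz
        refine ⟨z/2, ⟨by linarith [hz.1], by linarith [hz.2]⟩, ?_⟩
        rw [tent_left (by linarith [hz.2])]
        ring
      have h3 : Icc (0:ℝ) 1 ⊆ tent^[j] '' Icc 0 (2*y) := by
        apply ih (2*y) (by linarith) (by linarith)
        calc (1:ℝ) ≤ 2^(j+1) * y := hy
          _ = 2^j * (2*y) := by ring
      exact h3.trans (Set.image_mono h2)
    · push_neg at hc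
      have h2 : Icc (0:ℝ) 1 ⊆ tent '' Icc 0 y := by
        intro z hz
        refine ⟨z/2, ⟨by linarith [hz.1], by linarith [hz.2]⟩, ?_⟩
        rw [tent_left (by linarith [hz.2])]
        ring
      have h3 : Icc (0:ℝ) 1 ⊆ tent^[j] '' Icc 0 1 := by
        apply ih 1 (by norm_num) (by norm_num)
        have : (1:ℝ) ≤ 2^j := one_le_pow₀ (by norm_num : (1:ℝ) ≤ 2)
        linarith
      exact h3.trans (Set.image_mono h2)

/-- Covering from an interval anchored at 1. -/
lemma coverB : ∀ (j : ℕ), 1 ≤ j → ∀ (W : ℝ), 0 < W → W ≤ 1 → 1 ≤ 2^j * W →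
    Icc (0:ℝ) 1 ⊆ tent^[j] '' Icc (1-W) 1 := by
  intro j hj W hW0 hW1 hjW
  obtain ⟨j', rfl⟩ : ∃ j', j = j' + 1 := ⟨j - 1, by omega⟩
  rw [image_succ]
  by_cases hc : W ≤ 1/2
  · have h2 : Icc (0:ℝ) (2*W) ⊆ tent '' Icc (1-W) 1 := by
      intro z hz
      refine ⟨1 - z/2, ⟨by linarith [hz.2], by linarith [hz.1]⟩, ?_⟩
      rw [tent_right (by linarith [hz.2])]
      ring
    have h3 : Icc (0:ℝ) 1 ⊆ tent^[j'] '' Icc 0 (2*W) := by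
      apply coverC j' (2*W) (by linarith) (by linarith)
      calc (1:ℝ) ≤ 2^(j'+1) * W := hjW
        _ = 2^j' * (2*W) := by ring
    exact h3.trans (Set.image_mono h2)
  · push_neg at hc
    have h2 : Icc (0:ℝ) 1 ⊆ tent '' Icc (1-W) 1 := by
      intro z hz
      refine ⟨1 - z/2, ⟨by linarith [hz.2], by linarith [hz.1]⟩, ?_⟩
      rw [tent_right (by linarith [hz.2])]
      ring
    have h3 : Icc (0:ℝ) 1 ⊆ tent^[j'] '' Icc 0 1 := by
      apply coverC j' 1 (by norm_num) (by norm_num)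
      have : (1:ℝ) ≤ 2^j' := one_le_pow₀ (by norm_num : (1:ℝ) ≤ 2)
      linarith
    exact h3.trans (Set.image_mono h2)

/-- Main covering lemma: any subinterval of [0,1] of length L covers [0,1]
after j tent-iterations provided 2^j * L ≥ 4. -/
lemma coverD : ∀ (j : ℕ) (u v : ℝ), 0 ≤ u → v ≤ 1 → u < v → 4 ≤ 2^j * (v - u) →
    Icc (0:ℝ) 1 ⊆ tent^[j] '' Icc u v := by
  intro j
  induction j with
  | zero =>
    intro u v hu hv huv h4
    simp only [pow_zero, one_mul] at h4
    linarith
  | succ j ih =>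
    intro u v hu hv huv h4
    have hj1 : 1 ≤ j := by
      by_contra h
      have hj0 : j = 0 := by omega
      rw [hj0] at h4
      norm_num at h4
      linarith
    have h2j : (0:ℝ) < 2^(j+1) := by positivity
    rw [image_succ]
    by_cases hv2 : v ≤ 1/2
    · -- left branch: doubles
      have h2 : Icc (2*u) (2*v) ⊆ tent '' Icc u v := by
        intro z hz
        refine ⟨z/2, ⟨by linarith [hz.1], by linarith [hz.2]⟩, ?_⟩
        rw [tent_left (by linarith [hz.2])]
        ring
      have h3 : Icc (0:ℝ) 1 ⊆ tent^[j] '' Icc (2*u) (2*v) := by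
        apply ih (2*u) (2*v) (by linarith) (by linarith) (by linarith)
        calc (4:ℝ) ≤ 2^(j+1) * (v - u) := h4
          _ = 2^j * (2*v - 2*u) := by ring
      exact h3.trans (Set.image_mono h2)
    · push_neg at hv2
      by_cases hu2 : 1/2 ≤ u
      · -- right branch: doubles (reversed)
        have h2 : Icc (2 - 2*v) (2 - 2*u) ⊆ tent '' Icc u v := by
          intro z hz
          refine ⟨1 - z/2, ⟨by linarith [hz.2], by linarith [hz.1]⟩, ?_⟩
          rw [tent_right (by linarith [hz.2])]
          ring
        have h3 : Icc (0:ℝ) 1 ⊆ tent^[j] '' Icc (2-2*v) (2-2*u) := by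
          apply ih (2-2*v) (2-2*u) (by linarith) (by linarith) (by linarith)
          calc (4:ℝ) ≤ 2^(j+1) * (v - u) := h4
            _ = 2^j * ((2-2*u) - (2-2*v)) := by ring
        exact h3.trans (Set.image_mono h2)
      · push_neg at hu2
        -- straddles 1/2
        have hvu1 : v - u ≤ 1 := by linarith
        have hW : (1:ℝ) ≤ 2^j * (v - u) := by
          have : (2:ℝ)^(j+1) = 2 * 2^j := by ring
          rw [this] at h4
          nlinarith
        by_cases hs : u + v ≤ 1
        · -- use left half [u, 1/2]; image anchored at 1 with W = 1 - 2u ≥ v - u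
          have h2 : Icc (1 - (1 - 2*u)) 1 ⊆ tent '' Icc u v := by
            intro z hz
            have hz1 : 2*u ≤ z := by linarith [hz.1]
            refine ⟨z/2, ⟨by linarith, by linarith [hz.2]⟩, ?_⟩
            rw [tent_left (by linarith [hz.2])]
            ring
          have h3 : Icc (0:ℝ) 1 ⊆ tent^[j] '' Icc (1 - (1 - 2*u)) 1 := by
            apply coverB j hj1 (1 - 2*u) (by linarith) (by linarith)
            have hmono : 2^j * (v - u) ≤ 2^j * (1 - 2*u) := by
              have : (0:ℝ) ≤ 2^j := by positivity
              nlinarith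
            linarith
          exact h3.trans (Set.image_mono h2)
        · push_neg at hs
          -- use right half [1/2, v]; image anchored at 1 with W = 2v - 1 ≥ v - u
          have h2 : Icc (1 - (2*v - 1)) 1 ⊆ tent '' Icc u v := by
            intro z hz
            have hz1 : 2 - 2*v ≤ z := by linarith [hz.1]
            refine ⟨1 - z/2, ⟨by linarith [hz.2], by linarith⟩, ?_⟩
            rw [tent_right (by linarith [hz.2])]
            ring
          have h3 : Icc (0:ℝ) 1 ⊆ tent^[j] '' Icc (1 - (2*v - 1)) 1 := by
            apply coverB j hj1 (2*v - 1) (by linarith) (by linarith)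
            have hmono : 2^j * (v - u) ≤ 2^j * (2*v - 1) := by
              have : (0:ℝ) ≤ 2^j := by positivity
              nlinarith
            linarith
          exact h3.trans (Set.image_mono h2)

lemma exists_pow_between (d : ℝ) (hd : 0 < d) (hd4 : d ≤ 4) :
    ∃ T : ℕ, 4 ≤ 2^T * d ∧ 2^T * d ≤ 8 := by
  classical
  have hex : ∃ T : ℕ, 4 ≤ 2^T * d := by
    obtain ⟨N, hN⟩ := pow_unbounded_of_one_lt (4/d) (by norm_num : (1:ℝ) < 2)
    refine ⟨N, ?_⟩
    rw [div_lt_iff₀ hd] at hN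
    linarith
  let T := Nat.find hex
  have hT : 4 ≤ 2^T * d := Nat.find_spec hex
  refine ⟨T, hT, ?_⟩
  rcases Nat.eq_zero_or_pos T with h | h
  · rw [h]; norm_num; linarith
  · have hT1 : ¬ (4 ≤ 2^(T-1) * d) := Nat.find_min hex (by omega)
    push_neg at hT1
    have h2 : (2:ℝ)^T = 2 * 2^(T-1) := by
      rw [← pow_succ']
      congr 1
      omega
    rw [h2]
    nlinarith

theorem secant_slopes_bounded (ξ : ℝ → ℝ)
    (hcont : ContinuousOn ξ (Set.Icc 0 1))
    (hmaps : Set.MapsTo ξ (Set.Icc 0 1) (Set.Icc 0 1))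
    (hcomm : ∀ x ∈ Set.Icc (0:ℝ) 1, ξ (tent x) = tent (ξ x)) :
    ∃ t : ℝ, ∀ n : ℕ, ∀ k : ℕ, k < 2 ^ n →
      |(2 : ℝ) ^ n * (ξ (((k : ℝ) + 1) / 2 ^ n) - ξ ((k : ℝ) / 2 ^ n))| < t := by
  -- commutation for iterates
  have hcomm_iter : ∀ (j : ℕ) (x : ℝ), x ∈ Icc (0:ℝ) 1 →
      ξ (tent^[j] x) = tent^[j] (ξ x) := by
    intro j
    induction j with
    | zero => intro x _; simp
    | succ j ih =>
      intro x hx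
      rw [Function.iterate_succ_apply, Function.iterate_succ_apply]
      rw [ih (tent x) (tent_mem hx), hcomm x hx]
  -- uniform continuity
  have hUC : UniformContinuousOn ξ (Icc 0 1) :=
    isCompact_Icc.uniformContinuousOn_of_continuous hcont
  obtain ⟨δ, hδpos, hδ⟩ := (Metric.uniformContinuousOn_iff.mp hUC) (1/2) (by norm_num)
  have hδ8 : (0:ℝ) < 8/δ := by positivity
  refine ⟨8/δ + 1, ?_⟩
  intro n k hk
  have h2n : (0:ℝ) < 2^n := by positivity
  set p : ℝ := (k : ℝ) / 2^n with hp_def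
  set q : ℝ := ((k : ℝ) + 1) / 2^n with hq_def
  have hkc : ((k:ℝ) + 1) ≤ (2:ℝ)^n := by exact_mod_cast Nat.succ_le_of_lt hk
  have hp0 : (0:ℝ) ≤ p := div_nonneg (by positivity) (le_of_lt h2n)
  have hq1 : q ≤ 1 := by rw [hq_def, div_le_one h2n]; exact hkc
  have hpq : p ≤ q := by
    rw [hp_def, hq_def]
    have : (k:ℝ) ≤ (k:ℝ) + 1 := by linarith
    gcongr
  have hqp : q - p = 1/2^n := by rw [hp_def, hq_def]; ring
  have hsub : Icc p q ⊆ Icc (0:ℝ) 1 := fun x hx => ⟨le_trans hp0 hx.1, le_trans hx.2 hq1⟩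
  have hpmem : p ∈ Icc (0:ℝ) 1 := ⟨hp0, le_trans hpq hq1⟩
  have hqmem : q ∈ Icc (0:ℝ) 1 := ⟨le_trans hp0 hpq, hq1⟩
  have hξp := hmaps hpmem
  have hξq := hmaps hqmem
  -- main auxiliary estimate
  have haux : ∀ u v : ℝ, 0 ≤ u → v ≤ 1 → u < v → Icc u v ⊆ ξ '' Icc p q →
      (v - u) * 2^n ≤ 8/δ := by
    intro u v hu0 hv1 huv hIV
    obtain ⟨T, hT4, hT8⟩ := exists_pow_between (v - u) (by linarith) (by linarith)
    have hcov : Icc (0:ℝ) 1 ⊆ tent^[T] '' (ξ '' Icc p q) :=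
      (coverD T u v hu0 hv1 huv hT4).trans (Set.image_mono hIV)
    obtain ⟨w0, hw0, hw0e⟩ := hcov (show (0:ℝ) ∈ Icc (0:ℝ) 1 by norm_num)
    obtain ⟨x0, hx0, rfl⟩ := hw0
    obtain ⟨w1, hw1, hw1e⟩ := hcov (show (1:ℝ) ∈ Icc (0:ℝ) 1 by norm_num)
    obtain ⟨x1, hx1, rfl⟩ := hw1
    have hz0v : ξ (tent^[T] x0) = 0 := by rw [hcomm_iter T x0 (hsub hx0)]; exact hw0e
    have hz1v : ξ (tent^[T] x1) = 1 := by rw [hcomm_iter T x1 (hsub hx1)]; exact hw1e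
    have hz0m : tent^[T] x0 ∈ Icc (0:ℝ) 1 := tent_iter_mem T (hsub hx0)
    have hz1m : tent^[T] x1 ∈ Icc (0:ℝ) 1 := tent_iter_mem T (hsub hx1)
    have hfar : δ ≤ dist (tent^[T] x0) (tent^[T] x1) := by
      by_contra hlt
      push_neg at hlt
      have hcl := hδ _ hz0m _ hz1m hlt
      rw [Real.dist_eq, hz0v, hz1v] at hcl
      norm_num at hcl
    have hTpos : (0:ℝ) < 2^T := by positivity
    have hclose : dist (tent^[T] x0) (tent^[T] x1) ≤ 2^T * (q - p) := by
      rw [Real.dist_eq]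
      calc |tent^[T] x0 - tent^[T] x1| ≤ 2^T * |x0 - x1| := tent_iter_lip T x0 x1
        _ ≤ 2^T * (q - p) := by
            have hxx : |x0 - x1| ≤ q - p := by
              rw [abs_le]
              constructor
              · linarith [hx0.1, hx1.2]
              · linarith [hx0.2, hx1.1]
            nlinarith
    have h1 : δ * 2^n ≤ 2^T := by
      have hd1 : δ ≤ 2^T * (1/2^n) := by rw [← hqp]; exact hfar.trans hclose
      rw [mul_one_div, le_div_iff₀ h2n] at hd1
      linarith
    rw [le_div_iff₀ hδpos]
    have h2 : (v - u) * (δ * 2^n) ≤ (v - u) * 2^T :=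
      mul_le_mul_of_nonneg_left h1 (by linarith)
    nlinarith
  rw [abs_mul, abs_of_pos h2n]
  rcases lt_trichotomy (ξ p) (ξ q) with h | h | h
  · have hIV : Icc (ξ p) (ξ q) ⊆ ξ '' Icc p q :=
      intermediate_value_Icc hpq (hcont.mono hsub)
    have hb := haux (ξ p) (ξ q) hξp.1 hξq.2 h hIV
    rw [abs_of_pos (by linarith : (0:ℝ) < ξ q - ξ p), mul_comm]
    linarith
  · rw [h, sub_self, abs_zero, mul_zero]
    linarith
  · have hIV : Icc (ξ q) (ξ p) ⊆ ξ '' Icc p q :=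
      intermediate_value_Icc' hpq (hcont.mono hsub)
    have hb := haux (ξ q) (ξ p) hξq.1 hξp.2 h hIV
    rw [abs_sub_comm, abs_of_pos (by linarith : (0:ℝ) < ξ p - ξ q), mul_comm]
    linarith
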